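/- arXiv:2105.13019 — 2 statements merged into one kernel-verified Lean document; each statement's English description precedes it below -/
import Mathlib

section
/- Let $n \geq 1$ and $m \geq 0$ be integers and define the kernel $$k(t) = (-1)^n\,\frac{2^{n-1}}{\sqrt{\pi}}\sum_{j=0}^m (2n+4j+1)\,\Gamma\!\left(n+j+\tfrac{1}{2}\right)\frac{(-1)^j}{j!}\,P_{n+2j}(t).$$ If $f : \mathbb{R} \to \mathbb{R}$ is $n$-times continuously differentiable on a neighborhood of $x \in \mathbb{R}$, then $$f^{(n)}(x) = \lim_{h \to 0^+}\left(-\frac{1}{h}\right)^{n}\int_{-1}^1 k(t)\,f(x+ht)\,dt.$$ -/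
open Real Filter Finset intervalIntegral

/-- Legendre polynomial of degree `n` (Rodrigues formula), the orthogonal polynomial
on `[-1,1]` with weight `1` normalized by `P n 1 = 1`. -/
noncomputable def legendreP (n : ℕ) : ℝ → ℝ :=
  fun x => (1 / ((2:ℝ) ^ n * (Nat.factorial n : ℝ))) *
    iteratedDeriv n (fun y : ℝ => (y ^ 2 - 1) ^ n) x

/-- The kernel `k(t)` of the extended orthogonal derivative. -/
noncomputable def kker (n m : ℕ) (t : ℝ) : ℝ :=
  (-1:ℝ)^n * ((2:ℝ)^(n-1) / Real.sqrt Real.pi) *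
    ∑ j ∈ Finset.range (m+1),
      (2*(n:ℝ) + 4*(j:ℝ) + 1) * Real.Gamma ((n:ℝ) + (j:ℝ) + 1/2) *
        ((-1:ℝ)^j / (Nat.factorial j : ℝ)) * legendreP (n + 2*j) t

open Polynomial intervalIntegral

noncomputable def QQ (N : ℕ) : Polynomial ℝ := ((X:Polynomial ℝ)^2 - 1)^N

lemma iteratedDeriv_polyeval (k : ℕ) (p : Polynomial ℝ) :
    iteratedDeriv k (fun y : ℝ => p.eval y) = fun y => (derivative^[k] p).eval y := by
  induction k generalizing p with
  | zero => simp
  | succ k ih =>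
    rw [iteratedDeriv_succ, ih]
    funext y
    rw [Function.iterate_succ_apply']
    exact Polynomial.deriv _

lemma legendreP_eq (N : ℕ) (t : ℝ) :
    legendreP N t = (1 / ((2:ℝ)^N * (Nat.factorial N : ℝ))) * (derivative^[N] (QQ N)).eval t := by
  have : (fun y : ℝ => (y ^ 2 - 1) ^ N) = fun y : ℝ => (QQ N).eval y := by
    funext y; simp [QQ]
  rw [legendreP, this, iteratedDeriv_polyeval]

lemma boundary_one {N k : ℕ} (hk : k < N) : (derivative^[k] (QQ N)).eval (1:ℝ) = 0 := by
  have hdvd : ((X:Polynomial ℝ) - 1) ^ (N - k) ∣ derivative^[k] (QQ N) := by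
    apply Polynomial.pow_sub_dvd_iterate_derivative_of_pow_dvd
    have : QQ N = ((X - 1) * (X + 1) : Polynomial ℝ)^N := by
      rw [QQ]; ring_nf
    rw [this, mul_pow]
    exact Dvd.intro _ rfl
  obtain ⟨r, hr⟩ := hdvd
  rw [hr]
  simp [zero_pow (Nat.sub_ne_zero_of_lt hk)]

lemma boundary_neg_one {N k : ℕ} (hk : k < N) : (derivative^[k] (QQ N)).eval (-1:ℝ) = 0 := by
  have hdvd : ((X:Polynomial ℝ) + 1) ^ (N - k) ∣ derivative^[k] (QQ N) := by
    apply Polynomial.pow_sub_dvd_iterate_derivative_of_pow_dvd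
    have : QQ N = ((X + 1) * (X - 1) : Polynomial ℝ)^N := by
      rw [QQ]; ring_nf
    rw [this, mul_pow]
    exact Dvd.intro _ rfl
  obtain ⟨r, hr⟩ := hdvd
  rw [hr]
  have : ((-1:ℝ) + 1) = 0 := by ring
  simp [this, zero_pow (Nat.sub_ne_zero_of_lt hk)]

lemma poly_ii (p : Polynomial ℝ) (a b : ℝ) :
    IntervalIntegrable (fun x : ℝ => p.eval x) MeasureTheory.volume a b :=
  (p.continuous_aeval).intervalIntegrable a b

lemma parts_step (u v : Polynomial ℝ) :
    (∫ t in (-1:ℝ)..1, u.eval t * (derivative v).eval t) =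
      u.eval 1 * v.eval 1 - u.eval (-1) * v.eval (-1)
        - ∫ t in (-1:ℝ)..1, (derivative u).eval t * v.eval t := by
  apply intervalIntegral.integral_mul_deriv_eq_deriv_mul
    (fun t _ => u.hasDerivAt t) (fun t _ => v.hasDerivAt t)
    (poly_ii _ _ _) (poly_ii _ _ _)

lemma ftc_poly (q : Polynomial ℝ) :
    (∫ t in (-1:ℝ)..1, (derivative q).eval t) = q.eval 1 - q.eval (-1) := by
  apply intervalIntegral.integral_eq_sub_of_hasDerivAt (fun t _ => q.hasDerivAt t)
    (poly_ii _ _ _)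

lemma parts_iter (N : ℕ) (p : ℕ) (hp : p ≤ N) (r : Polynomial ℝ) :
    (∫ t in (-1:ℝ)..1, (derivative^[N] (QQ N)).eval t * r.eval t) =
      (-1:ℝ)^p * ∫ t in (-1:ℝ)..1, (derivative^[N-p] (QQ N)).eval t * (derivative^[p] r).eval t := by
  induction p generalizing r with
  | zero => simp
  | succ p ih =>
    have hpN : p ≤ N := Nat.le_of_succ_le hp
    rw [ih hpN r]
    have h1 : N - p = (N - (p+1)) + 1 := by omega
    have key : (∫ t in (-1:ℝ)..1, (derivative^[N-p] (QQ N)).eval t * (derivative^[p] r).eval t)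
        = - ∫ t in (-1:ℝ)..1, (derivative^[N-(p+1)] (QQ N)).eval t * (derivative^[p+1] r).eval t := by
      have h2 : derivative^[N-p] (QQ N) = derivative (derivative^[N-(p+1)] (QQ N)) := by
        rw [h1, Function.iterate_succ_apply']
      calc (∫ t in (-1:ℝ)..1, (derivative^[N-p] (QQ N)).eval t * (derivative^[p] r).eval t)
          = ∫ t in (-1:ℝ)..1, (derivative^[p] r).eval t * (derivative (derivative^[N-(p+1)] (QQ N))).eval t := by
            rw [← h2]; congr 1; funext t; ring
        _ = (derivative^[p] r).eval 1 * (derivative^[N-(p+1)] (QQ N)).eval 1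
              - (derivative^[p] r).eval (-1) * (derivative^[N-(p+1)] (QQ N)).eval (-1)
              - ∫ t in (-1:ℝ)..1, (derivative (derivative^[p] r)).eval t * (derivative^[N-(p+1)] (QQ N)).eval t :=
            parts_step _ _
        _ = - ∫ t in (-1:ℝ)..1, (derivative^[N-(p+1)] (QQ N)).eval t * (derivative^[p+1] r).eval t := by
            rw [boundary_one (by omega), boundary_neg_one (by omega)]
            rw [show derivative^[p+1] r = derivative (derivative^[p] r) from Function.iterate_succ_apply' _ _ _]
            rw [mul_zero, mul_zero, zero_sub, sub_eq_add_neg, neg_zero, zero_add, neg_inj]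
            exact intervalIntegral.integral_congr (fun t _ => by ring)
    rw [key]
    ring

lemma intpow (N : ℕ) : (∫ t in (-1:ℝ)..1, (t^2-1)^N)
    = (-1:ℝ)^N * (2^(2*N+1) * (Nat.factorial N : ℝ)^2 / (Nat.factorial (2*N+1) : ℝ)) := by
  induction N with
  | zero => norm_num
  | succ N ih =>
    have cont : ∀ k : ℕ, Continuous (fun t : ℝ => (t^2-1)^k) := by
      intro k; continuity
    have hder : ∀ t : ℝ, HasDerivAt (fun t : ℝ => t*(t^2-1)^(N+1))
        ((2*(N:ℝ)+3)*(t^2-1)^(N+1) + (2*(N:ℝ)+2)*(t^2-1)^N) t := by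
      intro t
      have h1 : HasDerivAt (fun t : ℝ => t^2-1) (2*t) t := by
        simpa using (hasDerivAt_pow 2 t).sub_const 1
      have h2 := h1.fun_pow (N+1)
      have h3 := (hasDerivAt_id t).fun_mul h2
      refine h3.congr_deriv ?_
      simp only [id_eq, Nat.add_sub_cancel]
      push_cast
      ring
    have hftc : (∫ t in (-1:ℝ)..1, ((2*(N:ℝ)+3)*(t^2-1)^(N+1) + (2*(N:ℝ)+2)*(t^2-1)^N))
        = 0 := by
      rw [intervalIntegral.integral_eq_sub_of_hasDerivAt (fun t _ => hder t)
        (Continuous.intervalIntegrable (by continuity) _ _)]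
      norm_num
    have hsplit : (∫ t in (-1:ℝ)..1, ((2*(N:ℝ)+3)*(t^2-1)^(N+1) + (2*(N:ℝ)+2)*(t^2-1)^N))
        = (2*(N:ℝ)+3) * (∫ t in (-1:ℝ)..1, (t^2-1)^(N+1))
          + (2*(N:ℝ)+2) * (∫ t in (-1:ℝ)..1, (t^2-1)^N) := by
      rw [intervalIntegral.integral_add (f := fun t => (2*(N:ℝ)+3)*(t^2-1)^(N+1))
        (g := fun t => (2*(N:ℝ)+2)*(t^2-1)^N) ((continuous_const.mul (cont (N+1))).intervalIntegrable _ _)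
        ((continuous_const.mul (cont N)).intervalIntegrable _ _),
        intervalIntegral.integral_const_mul, intervalIntegral.integral_const_mul]
    have key : (∫ t in (-1:ℝ)..1, (t^2-1)^(N+1))
        = -(2*(N:ℝ)+2)/(2*(N:ℝ)+3) * (∫ t in (-1:ℝ)..1, (t^2-1)^N) := by
      have h3 : (2*(N:ℝ)+3) ≠ 0 := by positivity
      field_simp
      linarith [hsplit.symm.trans hftc]
    rw [key, ih]
    have hfac : (Nat.factorial (2*(N+1)+1) : ℝ)
        = (2*(N:ℝ)+3) * ((2*(N:ℝ)+2) * (Nat.factorial (2*N+1) : ℝ)) := by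
      have : 2*(N+1)+1 = (2*N+1) + 1 + 1 := by omega
      rw [this, Nat.factorial_succ, Nat.factorial_succ]
      push_cast
      ring
    have hfacN : (Nat.factorial (N+1) : ℝ) = ((N:ℝ)+1) * (Nat.factorial N : ℝ) := by
      rw [Nat.factorial_succ]; push_cast; ring
    have h1 : (Nat.factorial (2*N+1) : ℝ) ≠ 0 := Nat.cast_ne_zero.mpr (Nat.factorial_ne_zero _)
    have h3 : (2*(N:ℝ)+3) ≠ 0 := by positivity
    rw [hfac, hfacN]
    have h2 : (2:ℝ)^(2*(N+1)+1) = 4 * 2^(2*N+1) := by rw [pow_succ, pow_succ]; ring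
    rw [h2]
    field_simp
    ring

lemma QQ_eval (N : ℕ) (t : ℝ) : (QQ N).eval t = (t^2-1)^N := by simp [QQ]

lemma moment_lt {N p : ℕ} (hp : p < N) :
    (∫ t in (-1:ℝ)..1, (derivative^[N] (QQ N)).eval t * t^p) = 0 := by
  have hr : ∀ t : ℝ, (t:ℝ)^p = ((X:Polynomial ℝ)^p).eval t := by intro t; simp
  have := parts_iter N p (le_of_lt hp) ((X:Polynomial ℝ)^p)
  have hXp : derivative^[p] ((X:Polynomial ℝ)^p) = Polynomial.C ((p.factorial : ℝ)) := by
    rw [Polynomial.iterate_derivative_X_pow_eq_C_mul, Nat.sub_self, pow_zero, mul_one,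
      Nat.descFactorial_self]
  calc (∫ t in (-1:ℝ)..1, (derivative^[N] (QQ N)).eval t * t^p)
      = ∫ t in (-1:ℝ)..1, (derivative^[N] (QQ N)).eval t * ((X:Polynomial ℝ)^p).eval t := by
        exact intervalIntegral.integral_congr (fun t _ => by rw [← hr])
    _ = (-1:ℝ)^p * ∫ t in (-1:ℝ)..1, (derivative^[N-p] (QQ N)).eval t
          * (derivative^[p] ((X:Polynomial ℝ)^p)).eval t := this
    _ = 0 := by
        rw [hXp]
        have h1 : N - p = (N - p - 1) + 1 := by omega
        have : (∫ t in (-1:ℝ)..1, (derivative^[N-p] (QQ N)).eval t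
            * (Polynomial.C ((p.factorial : ℝ))).eval t)
            = (p.factorial : ℝ) * ∫ t in (-1:ℝ)..1, (derivative (derivative^[N-p-1] (QQ N))).eval t := by
          rw [← intervalIntegral.integral_const_mul]
          apply intervalIntegral.integral_congr
          intro t _
          rw [h1, Function.iterate_succ_apply']
          simp [mul_comm]
        rw [this, ftc_poly, boundary_one (by omega), boundary_neg_one (by omega)]
        ring

lemma moment_eq (N : ℕ) :
    (∫ t in (-1:ℝ)..1, (derivative^[N] (QQ N)).eval t * t^N)
      = 2^(2*N+1) * (Nat.factorial N : ℝ)^3 / (Nat.factorial (2*N+1) : ℝ) := by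
  have hXp : derivative^[N] ((X:Polynomial ℝ)^N) = Polynomial.C ((N.factorial : ℝ)) := by
    rw [Polynomial.iterate_derivative_X_pow_eq_C_mul, Nat.sub_self, pow_zero, mul_one,
      Nat.descFactorial_self]
  calc (∫ t in (-1:ℝ)..1, (derivative^[N] (QQ N)).eval t * t^N)
      = ∫ t in (-1:ℝ)..1, (derivative^[N] (QQ N)).eval t * ((X:Polynomial ℝ)^N).eval t := by
        exact intervalIntegral.integral_congr (fun t _ => by simp)
    _ = (-1:ℝ)^N * ∫ t in (-1:ℝ)..1, (derivative^[N-N] (QQ N)).eval t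
          * (derivative^[N] ((X:Polynomial ℝ)^N)).eval t := parts_iter N N le_rfl _
    _ = (-1:ℝ)^N * ((N.factorial : ℝ) * ∫ t in (-1:ℝ)..1, (t^2-1)^N) := by
        rw [hXp, Nat.sub_self]
        congr 1
        rw [← intervalIntegral.integral_const_mul]
        exact intervalIntegral.integral_congr (fun t _ => by simp [QQ_eval, mul_comm])
    _ = 2^(2*N+1) * (Nat.factorial N : ℝ)^3 / (Nat.factorial (2*N+1) : ℝ) := by
        rw [intpow]
        rw [show ((-1:ℝ)^N * ((N.factorial:ℝ) * ((-1:ℝ)^N * (2^(2*N+1) * (N.factorial:ℝ)^2 / ((2*N+1).factorial:ℝ)))))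
          = ((-1:ℝ)^N)^2 * ((N.factorial:ℝ) * (2^(2*N+1) * (N.factorial:ℝ)^2 / ((2*N+1).factorial:ℝ))) by ring]
        rw [← pow_mul, pow_mul']
        simp
        ring

lemma legendre_cont (N : ℕ) : Continuous (legendreP N) := by
  have : legendreP N = fun t => (1 / ((2:ℝ)^N * (Nat.factorial N : ℝ))) * (derivative^[N] (QQ N)).eval t := by
    funext t; exact legendreP_eq N t
  rw [this]
  exact continuous_const.mul (Polynomial.continuous_aeval _)

lemma legendre_moment_lt {N p : ℕ} (hp : p < N) :
    (∫ t in (-1:ℝ)..1, legendreP N t * t^p) = 0 := by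
  have : (∫ t in (-1:ℝ)..1, legendreP N t * t^p)
      = (1 / ((2:ℝ)^N * (Nat.factorial N : ℝ))) * ∫ t in (-1:ℝ)..1, (derivative^[N] (QQ N)).eval t * t^p := by
    rw [← intervalIntegral.integral_const_mul]
    exact intervalIntegral.integral_congr (fun t _ => by rw [legendreP_eq]; ring)
  rw [this, moment_lt hp, mul_zero]

lemma legendre_moment_eq (N : ℕ) :
    (∫ t in (-1:ℝ)..1, legendreP N t * t^N)
      = 2^(N+1) * (Nat.factorial N : ℝ)^2 / (Nat.factorial (2*N+1) : ℝ) := by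
  have : (∫ t in (-1:ℝ)..1, legendreP N t * t^N)
      = (1 / ((2:ℝ)^N * (Nat.factorial N : ℝ))) * ∫ t in (-1:ℝ)..1, (derivative^[N] (QQ N)).eval t * t^N := by
    rw [← intervalIntegral.integral_const_mul]
    exact intervalIntegral.integral_congr (fun t _ => by rw [legendreP_eq]; ring)
  rw [this, moment_eq]
  have h1 : ((2:ℝ)^N) ≠ 0 := by positivity
  have h2 : (Nat.factorial N : ℝ) ≠ 0 := Nat.cast_ne_zero.mpr (Nat.factorial_ne_zero _)
  have h3 : (Nat.factorial (2*N+1) : ℝ) ≠ 0 := Nat.cast_ne_zero.mpr (Nat.factorial_ne_zero _)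
  have h4 : (2:ℝ)^(2*N+1) = 2^N * 2^(N+1) := by rw [← pow_add]; congr 1; omega
  field_simp
  rw [h4]

lemma gamma_half (N : ℕ) : Real.Gamma ((N:ℝ) + 1/2)
    = (Nat.factorial (2*N) : ℝ) * Real.sqrt Real.pi / (4^N * (Nat.factorial N : ℝ)) := by
  induction N with
  | zero => simpa using Real.Gamma_one_half_eq
  | succ N ih =>
    have h0 : ((N:ℝ) + 1/2) ≠ 0 := by positivity
    have : ((N+1:ℕ):ℝ) + 1/2 = ((N:ℝ) + 1/2) + 1 := by push_cast; ring
    rw [this, Real.Gamma_add_one h0, ih]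
    have e1 : (Nat.factorial (2*(N+1)) : ℝ) = (2*(N:ℝ)+2) * ((2*(N:ℝ)+1) * (Nat.factorial (2*N) : ℝ)) := by
      have : 2*(N+1) = (2*N+1)+1 := by omega
      rw [this, Nat.factorial_succ, Nat.factorial_succ]; push_cast; ring
    have e2 : (Nat.factorial (N+1) : ℝ) = ((N:ℝ)+1) * (Nat.factorial N : ℝ) := by
      rw [Nat.factorial_succ]; push_cast; ring
    have h2 : (Nat.factorial N : ℝ) ≠ 0 := Nat.cast_ne_zero.mpr (Nat.factorial_ne_zero _)
    have h4 : ((4:ℝ)^N) ≠ 0 := by positivity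
    rw [e1, e2, pow_succ]
    field_simp
    ring

lemma kker_int (n m p : ℕ) :
    (∫ t in (-1:ℝ)..1, kker n m t * t^p)
      = (-1:ℝ)^n * ((2:ℝ)^(n-1) / Real.sqrt Real.pi) *
          ∑ j ∈ Finset.range (m+1),
            (2*(n:ℝ) + 4*(j:ℝ) + 1) * Real.Gamma ((n:ℝ) + (j:ℝ) + 1/2) *
              ((-1:ℝ)^j / (Nat.factorial j : ℝ)) *
                ∫ t in (-1:ℝ)..1, legendreP (n + 2*j) t * t^p := by
  calc (∫ t in (-1:ℝ)..1, kker n m t * t^p)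
      = ∫ t in (-1:ℝ)..1, ∑ j ∈ Finset.range (m+1),
          ((-1:ℝ)^n * ((2:ℝ)^(n-1) / Real.sqrt Real.pi) *
            ((2*(n:ℝ) + 4*(j:ℝ) + 1) * Real.Gamma ((n:ℝ) + (j:ℝ) + 1/2) *
              ((-1:ℝ)^j / (Nat.factorial j : ℝ))) * (legendreP (n + 2*j) t * t^p)) := by
        apply intervalIntegral.integral_congr
        intro t _
        simp only [kker]
        rw [mul_assoc, Finset.sum_mul, Finset.mul_sum]
        exact Finset.sum_congr rfl (fun j _ => by ring)
    _ = ∑ j ∈ Finset.range (m+1),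
          ∫ t in (-1:ℝ)..1,
            ((-1:ℝ)^n * ((2:ℝ)^(n-1) / Real.sqrt Real.pi) *
              ((2*(n:ℝ) + 4*(j:ℝ) + 1) * Real.Gamma ((n:ℝ) + (j:ℝ) + 1/2) *
                ((-1:ℝ)^j / (Nat.factorial j : ℝ))) * (legendreP (n + 2*j) t * t^p)) :=
        intervalIntegral.integral_finset_sum (fun j _ =>
          (continuous_const.mul ((legendre_cont (n+2*j)).mul (continuous_pow p))).intervalIntegrable _ _)
    _ = (-1:ℝ)^n * ((2:ℝ)^(n-1) / Real.sqrt Real.pi) *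
          ∑ j ∈ Finset.range (m+1),
            (2*(n:ℝ) + 4*(j:ℝ) + 1) * Real.Gamma ((n:ℝ) + (j:ℝ) + 1/2) *
              ((-1:ℝ)^j / (Nat.factorial j : ℝ)) *
                ∫ t in (-1:ℝ)..1, legendreP (n + 2*j) t * t^p := by
        rw [Finset.mul_sum]
        refine Finset.sum_congr rfl (fun j _ => ?_)
        rw [intervalIntegral.integral_const_mul]
        ring

lemma kker_moment_lt {n : ℕ} (m : ℕ) {p : ℕ} (hp : p < n) :
    (∫ t in (-1:ℝ)..1, kker n m t * t^p) = 0 := by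
  rw [kker_int]
  have : ∀ j ∈ Finset.range (m+1),
      (2*(n:ℝ) + 4*(j:ℝ) + 1) * Real.Gamma ((n:ℝ) + (j:ℝ) + 1/2) *
        ((-1:ℝ)^j / (Nat.factorial j : ℝ)) *
          (∫ t in (-1:ℝ)..1, legendreP (n + 2*j) t * t^p) = 0 := by
    intro j _
    rw [legendre_moment_lt (by omega), mul_zero]
  rw [Finset.sum_congr rfl this]
  simp

lemma kker_moment_eq {n : ℕ} (m : ℕ) (hn : 1 ≤ n) :
    (∫ t in (-1:ℝ)..1, kker n m t * t^n) = (-1:ℝ)^n * (Nat.factorial n : ℝ) := by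
  rw [kker_int]
  have hsum : (∑ j ∈ Finset.range (m+1),
      (2*(n:ℝ) + 4*(j:ℝ) + 1) * Real.Gamma ((n:ℝ) + (j:ℝ) + 1/2) *
        ((-1:ℝ)^j / (Nat.factorial j : ℝ)) *
          ∫ t in (-1:ℝ)..1, legendreP (n + 2*j) t * t^n)
      = (2*(n:ℝ) + 1) * Real.Gamma ((n:ℝ) + 1/2) *
          (2^(n+1) * (Nat.factorial n : ℝ)^2 / (Nat.factorial (2*n+1) : ℝ)) := by
    rw [Finset.sum_eq_single 0]
    · rw [show n + 2*0 = n by ring, legendre_moment_eq]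
      norm_num
    · intro j _ hj
      have : n < n + 2*j := by omega
      rw [legendre_moment_lt this, mul_zero]
    · intro h; exact absurd (Finset.mem_range.mpr (by omega)) h
  rw [hsum, gamma_half]
  obtain ⟨k, rfl⟩ : ∃ k, n = k + 1 := ⟨n - 1, by omega⟩
  have hπ : Real.sqrt Real.pi ≠ 0 := by
    positivity
  have h2 : (Nat.factorial (k+1) : ℝ) ≠ 0 := Nat.cast_ne_zero.mpr (Nat.factorial_ne_zero _)
  have h3 : (Nat.factorial (2*(k+1)+1) : ℝ) ≠ 0 := Nat.cast_ne_zero.mpr (Nat.factorial_ne_zero _)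
  have h4 : ((4:ℝ)^(k+1)) ≠ 0 := by positivity
  have hfac : (Nat.factorial (2*(k+1)+1) : ℝ) = (2*((k:ℝ)+1)+1) * (Nat.factorial (2*(k+1)) : ℝ) := by
    rw [Nat.factorial_succ]; push_cast; ring
  have hfz : (Nat.factorial (2*(k+1)) : ℝ) ≠ 0 := Nat.cast_ne_zero.mpr (Nat.factorial_ne_zero _)
  rw [show (k+1) - 1 = k from rfl, hfac]
  have h4e : ((4:ℝ)^(k+1)) = 2^k * 2^(k+1+1) := by
    rw [show ((4:ℝ)) = 2^2 from by norm_num, ← pow_mul, ← pow_add]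
    congr 1; omega
  rw [h4e]
  push_cast
  field_simp

open Asymptotics in

lemma peano {x ε : ℝ} (hε : 0 < ε) (n : ℕ) {f : ℝ → ℝ}
    (hf : ContDiffOn ℝ n f (Metric.ball x ε)) :
    (fun u : ℝ => f (x+u) - ∑ p ∈ Finset.range (n+1),
        iteratedDeriv p f x * u^p / (Nat.factorial p : ℝ))
      =o[nhds (0:ℝ)] fun u => u^n := by
  induction n generalizing f with
  | zero =>
    have hx : x ∈ Metric.ball x ε := Metric.mem_ball_self hε
    have hcont : ContinuousAt f x :=
      (hf.continuousOn.continuousAt (Metric.isOpen_ball.mem_nhds hx))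
    have ht : Filter.Tendsto (fun u : ℝ => f (x+u) - f x) (nhds 0) (nhds 0) := by
      have h1 : Filter.Tendsto (fun u : ℝ => x + u) (nhds 0) (nhds x) := by
        simpa using (continuous_add_left x).tendsto (0:ℝ)
      have := (hcont.tendsto).comp h1
      simpa using this.sub_const (f x)
    simp only [zero_add, Finset.range_one, Finset.sum_singleton, pow_zero, iteratedDeriv_zero,
      Nat.factorial_zero, Nat.cast_one, div_one, mul_one]
    exact (Asymptotics.isLittleO_one_iff ℝ).mpr ht
  | succ n ih =>
    have hcast : ((n:ℕ) : WithTop ℕ∞) + 1 ≤ (((n+1:ℕ)) : WithTop ℕ∞) := by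
      norm_cast
    have hg : ContDiffOn ℝ n (deriv f) (Metric.ball x ε) :=
      hf.deriv_of_isOpen Metric.isOpen_ball hcast
    have IH := ih hg
    -- differentiability of f on the ball
    have hdf : DifferentiableOn ℝ f (Metric.ball x ε) := by
      apply hf.differentiableOn
      norm_cast
    -- the remainder and its derivative
    set R : ℝ → ℝ := fun u => f (x+u) - ∑ p ∈ Finset.range (n+2),
        iteratedDeriv p f x * u^p / (Nat.factorial p : ℝ) with hR
    set Rg : ℝ → ℝ := fun u => deriv f (x+u) - ∑ p ∈ Finset.range (n+1),
        iteratedDeriv p (deriv f) x * u^p / (Nat.factorial p : ℝ) with hRg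
    have hder : ∀ u : ℝ, |u| < ε → HasDerivAt R (Rg u) u := by
      intro u hu
      have hmem : x + u ∈ Metric.ball x ε := by
        simpa [Metric.mem_ball, Real.dist_eq] using hu
      have hfd : DifferentiableAt ℝ f (x+u) :=
        hdf.differentiableAt (Metric.isOpen_ball.mem_nhds hmem)
      have h1 : HasDerivAt (fun u : ℝ => f (x+u)) (deriv f (x+u)) u := by
        have := (hfd.hasDerivAt.comp u ((hasDerivAt_id u).const_add x))
        simpa [Function.comp_def] using this
      have h2 : HasDerivAt (fun u : ℝ => ∑ p ∈ Finset.range (n+2),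
          iteratedDeriv p f x * u^p / (Nat.factorial p : ℝ))
          (∑ p ∈ Finset.range (n+1),
            iteratedDeriv p (deriv f) x * u^p / (Nat.factorial p : ℝ)) u := by
        have h3 : HasDerivAt (fun u : ℝ => ∑ p ∈ Finset.range (n+2),
            iteratedDeriv p f x * u^p / (Nat.factorial p : ℝ))
            (∑ p ∈ Finset.range (n+2),
              iteratedDeriv p f x * ((p:ℝ) * u^(p-1)) / (Nat.factorial p : ℝ)) u := by
          apply HasDerivAt.fun_sum
          intro p _
          have h5 := (((hasDerivAt_pow p u).const_mul (iteratedDeriv p f x)).div_const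
            (Nat.factorial p : ℝ))
          convert h5 using 1
        convert h3 using 1
        conv_rhs => rw [Finset.sum_range_succ']
        simp only [Nat.cast_zero, zero_mul, mul_zero, zero_div, add_zero]
        refine (Finset.sum_congr rfl (fun p _ => ?_)).symm
        rw [Nat.factorial_succ, iteratedDeriv_succ']
        push_cast
        have hpf : ((p:ℝ)+1) ≠ 0 := by positivity
        have hff : ((Nat.factorial p : ℝ)) ≠ 0 := Nat.cast_ne_zero.mpr (Nat.factorial_ne_zero _)
        field_simp
      exact h1.sub h2
    have hR0 : R 0 = 0 := by
      simp only [hR, add_zero]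
      rw [Finset.sum_range_succ']
      simp
    -- main estimate
    rw [Asymptotics.isLittleO_iff]
    intro c hc
    rw [Asymptotics.isLittleO_iff] at IH
    have hev := IH hc
    rw [Metric.eventually_nhds_iff] at hev ⊢
    obtain ⟨δ, hδ, hδle⟩ := hev
    refine ⟨min δ ε, lt_min hδ hε, ?_⟩
    intro u hu
    rw [Real.dist_eq, sub_zero] at hu
    have huδ : |u| < δ := lt_of_lt_of_le hu (min_le_left _ _)
    have huε : |u| < ε := lt_of_lt_of_le hu (min_le_right _ _)
    have hbound : ∀ v ∈ Set.uIcc (0:ℝ) u, ‖Rg v‖ ≤ c * |u|^n := by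
      intro v hv
      have hvu : |v| ≤ |u| := by
        rw [Set.uIcc_eq_union] at hv
        rcases hv with hv | hv <;> rw [Set.mem_Icc] at hv <;>
          · rw [abs_le]; constructor <;> [nlinarith [neg_abs_le u, le_abs_self u];
              nlinarith [neg_abs_le u, le_abs_self u]]
      have : dist v 0 < δ := by rw [Real.dist_eq, sub_zero]; exact lt_of_le_of_lt hvu huδ
      have := hδle this
      calc ‖Rg v‖ ≤ c * ‖v^n‖ := this
        _ ≤ c * |u|^n := by
            rw [Real.norm_eq_abs, abs_pow]
            exact mul_le_mul_of_nonneg_left (pow_le_pow_left₀ (abs_nonneg v) hvu n) (le_of_lt hc)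
    have hderOn : ∀ v ∈ Set.uIcc (0:ℝ) u, HasDerivWithinAt R (Rg v) (Set.uIcc (0:ℝ) u) v := by
      intro v hv
      have hvu : |v| ≤ |u| := by
        rw [Set.uIcc_eq_union] at hv
        rcases hv with hv | hv <;> rw [Set.mem_Icc] at hv <;>
          · rw [abs_le]; constructor <;> [nlinarith [neg_abs_le u, le_abs_self u];
              nlinarith [neg_abs_le u, le_abs_self u]]
      exact (hder v (lt_of_le_of_lt hvu huε)).hasDerivWithinAt
    have := (convex_uIcc (0:ℝ) u).norm_image_sub_le_of_norm_hasDerivWithin_le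
      hderOn hbound (Set.left_mem_uIcc) (Set.right_mem_uIcc)
    rw [hR0, sub_zero, sub_zero] at this
    calc ‖R u‖ ≤ c * |u|^n * ‖u‖ := this
      _ = c * ‖u^(n+1)‖ := by
          rw [Real.norm_eq_abs, Real.norm_eq_abs, abs_pow, pow_succ]
          ring

lemma kker_cont (n m : ℕ) : Continuous (kker n m) := by
  unfold kker
  exact continuous_const.mul (continuous_finset_sum _ (fun j _ =>
    continuous_const.mul (legendre_cont (n+2*j))))

set_option maxHeartbeats 1000000 in
theorem stmt1 (n m : ℕ) (hn : 1 ≤ n) (x : ℝ) (f : ℝ → ℝ)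
    (hf : ∃ ε > (0:ℝ), ContDiffOn ℝ ((n : ℕ) : ℕ∞) f (Metric.ball x ε)) :
    Filter.Tendsto
      (fun h : ℝ => (-(1/h)) ^ n * ∫ t in (-1:ℝ)..1, kker n m t * f (x + h*t))
      (nhdsWithin (0:ℝ) (Set.Ioi 0)) (nhds (iteratedDeriv n f x)) := by
  obtain ⟨ε, hε, hcd⟩ := hf
  have hcd' : ContDiffOn ℝ (n : ℕ) f (Metric.ball x ε) := by exact_mod_cast hcd
  set T : ℝ → ℝ := fun u => ∑ p ∈ Finset.range (n+1),
      iteratedDeriv p f x * u^p / (Nat.factorial p : ℝ) with hT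
  set R : ℝ → ℝ := fun u => f (x+u) - T u with hRdef
  have hpeano : R =o[nhds (0:ℝ)] fun u => u^n := peano hε n hcd'
  have hTcont : Continuous T := by
    apply continuous_finset_sum
    intro p _
    exact (continuous_const.mul (continuous_pow p)).div_const _
  -- continuity of f ∘ shift for small h
  have hcontf : ∀ h : ℝ, 0 < h → h < ε →
      ContinuousOn (fun t : ℝ => f (x + h*t)) (Set.uIcc (-1:ℝ) 1) := by
    intro h hh hhε
    apply hcd.continuousOn.comp (Continuous.continuousOn (by continuity))
    intro t ht
    rw [Set.uIcc_of_le (by norm_num), Set.mem_Icc] at ht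
    rw [Metric.mem_ball, Real.dist_eq]
    have : |x + h*t - x| = h * |t| := by
      rw [add_sub_cancel_left, abs_mul, abs_of_pos hh]
    rw [this]
    have : |t| ≤ 1 := abs_le.mpr ht
    nlinarith
  -- the eventual identity
  have main : ∀ᶠ h in nhdsWithin (0:ℝ) (Set.Ioi 0),
      (-(1/h)) ^ n * (∫ t in (-1:ℝ)..1, kker n m t * f (x + h*t))
        = iteratedDeriv n f x
            + (-(1/h)) ^ n * ∫ t in (-1:ℝ)..1, kker n m t * R (h*t) := by
    filter_upwards [Ioo_mem_nhdsGT_of_mem (Set.mem_Ico.mpr ⟨le_refl (0:ℝ), hε⟩)] with h hh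
    obtain ⟨hh0, hhε⟩ := hh
    have hc1 := hcontf h hh0 hhε
    have ikf : IntervalIntegrable (fun t : ℝ => kker n m t * f (x + h*t))
        MeasureTheory.volume (-1) 1 :=
      (((kker_cont n m).continuousOn).mul hc1).intervalIntegrable
    have ikT : IntervalIntegrable (fun t : ℝ => kker n m t * T (h*t))
        MeasureTheory.volume (-1) 1 :=
      ((kker_cont n m).mul (hTcont.comp (by continuity))).intervalIntegrable _ _
    have ikR : IntervalIntegrable (fun t : ℝ => kker n m t * R (h*t))
        MeasureTheory.volume (-1) 1 := by
      have : (fun t : ℝ => kker n m t * R (h*t))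
          = (fun t : ℝ => kker n m t * f (x + h*t)) - fun t : ℝ => kker n m t * T (h*t) := by
        funext t; simp [hRdef]; ring
      rw [this]
      exact ikf.sub ikT
    have hsplit : (∫ t in (-1:ℝ)..1, kker n m t * f (x + h*t))
        = (∫ t in (-1:ℝ)..1, kker n m t * T (h*t))
          + ∫ t in (-1:ℝ)..1, kker n m t * R (h*t) := by
      rw [← intervalIntegral.integral_add ikT ikR]
      apply intervalIntegral.integral_congr
      intro t _
      simp [hRdef]
      ring
    have hTint : (∫ t in (-1:ℝ)..1, kker n m t * T (h*t))
        = (-1:ℝ)^n * iteratedDeriv n f x * h^n := by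
      have e1 : (∫ t in (-1:ℝ)..1, kker n m t * T (h*t))
          = ∑ p ∈ Finset.range (n+1), (iteratedDeriv p f x * h^p / (Nat.factorial p : ℝ))
              * ∫ t in (-1:ℝ)..1, kker n m t * t^p := by
        have estep : (fun t : ℝ => kker n m t * T (h*t)) = fun t : ℝ =>
            ∑ p ∈ Finset.range (n+1), (iteratedDeriv p f x * h^p / (Nat.factorial p : ℝ))
              * (kker n m t * t^p) := by
          funext t
          rw [hT, Finset.mul_sum]
          exact Finset.sum_congr rfl (fun p _ => by rw [mul_pow]; ring)
        rw [estep]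
        rw [intervalIntegral.integral_finset_sum
          (f := fun p t => (iteratedDeriv p f x * h^p / (Nat.factorial p : ℝ)) * (kker n m t * t^p)) (fun p _ =>
          (continuous_const.mul ((kker_cont n m).mul (continuous_pow p))).intervalIntegrable _ _)]
        exact Finset.sum_congr rfl (fun p _ => intervalIntegral.integral_const_mul _ _)
      rw [e1, Finset.sum_eq_single n]
      · rw [kker_moment_eq m hn]
        have : (Nat.factorial n : ℝ) ≠ 0 := Nat.cast_ne_zero.mpr (Nat.factorial_ne_zero _)
        field_simp
      · intro p hp hpn
        rw [kker_moment_lt m (by rw [Finset.mem_range] at hp; omega), mul_zero]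
      · intro hmem; exact absurd (Finset.mem_range.mpr (by omega)) hmem
    rw [hsplit, mul_add, hTint]
    have hh0' : h ≠ 0 := ne_of_gt hh0
    congr 1
    rw [show (-(1/h))^n = (-1:ℝ)^n * (1/h)^n from by rw [← neg_one_mul, mul_pow]]
    rw [show ((-1:ℝ)^n * (1/h)^n) * ((-1:ℝ)^n * iteratedDeriv n f x * h^n)
      = ((-1:ℝ)^n)^2 * ((1/h)^n * h^n) * iteratedDeriv n f x from by ring]
    rw [← pow_mul, pow_mul', ← mul_pow, one_div, inv_mul_cancel₀ hh0']
    simp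
  -- the error term tends to zero
  have hE : Filter.Tendsto (fun h : ℝ => (-(1/h)) ^ n * ∫ t in (-1:ℝ)..1, kker n m t * R (h*t))
      (nhdsWithin (0:ℝ) (Set.Ioi 0)) (nhds 0) := by
    set C : ℝ := ∫ t in (-1:ℝ)..1, |kker n m t| with hC
    have hC0 : 0 ≤ C := intervalIntegral.integral_nonneg (by norm_num) (fun t _ => abs_nonneg _)
    rw [Metric.tendsto_nhdsWithin_nhds]
    intro c hc
    set c' : ℝ := c / (C+1) with hc'
    have hc'0 : 0 < c' := div_pos hc (by linarith)
    rw [Asymptotics.isLittleO_iff] at hpeano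
    have hev := hpeano hc'0
    rw [Metric.eventually_nhds_iff] at hev
    obtain ⟨δ, hδ, hδle⟩ := hev
    refine ⟨min δ ε, lt_min hδ hε, ?_⟩
    intro h hh hdist
    rw [Real.dist_eq, sub_zero] at hdist
    rw [Set.mem_Ioi] at hh
    have habs : |h| = h := abs_of_pos hh
    have hhδ : h < δ := by rw [habs] at hdist; exact lt_of_lt_of_le hdist (min_le_left _ _)
    have hhε : h < ε := by rw [habs] at hdist; exact lt_of_lt_of_le hdist (min_le_right _ _)
    -- pointwise bound
    have hpt : ∀ t ∈ Set.Icc (-1:ℝ) 1, |kker n m t * R (h*t)| ≤ |kker n m t| * (c' * h^n) := by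
      intro t ht
      rw [Set.mem_Icc] at ht
      have ht1 : |t| ≤ 1 := abs_le.mpr ht
      have hvd : dist (h*t) 0 < δ := by
        rw [Real.dist_eq, sub_zero, abs_mul, habs]
        nlinarith
      have := hδle hvd
      rw [Real.norm_eq_abs, Real.norm_eq_abs, abs_pow, abs_mul, habs] at this
      rw [abs_mul]
      have h2 : |R (h*t)| ≤ c' * h^n := by
        refine le_trans this ?_
        have : (h*|t|)^n ≤ h^n := by
          apply pow_le_pow_left₀ (by positivity)
          nlinarith
        nlinarith
      exact mul_le_mul_of_nonneg_left h2 (abs_nonneg _)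
    have hc1 := hcontf h hh hhε
    have ikR : IntervalIntegrable (fun t : ℝ => kker n m t * R (h*t))
        MeasureTheory.volume (-1) 1 := by
      apply ContinuousOn.intervalIntegrable
      apply ContinuousOn.mul (kker_cont n m).continuousOn
      exact ContinuousOn.sub hc1 ((hTcont.comp (by continuity)).continuousOn)
    have hint : |∫ t in (-1:ℝ)..1, kker n m t * R (h*t)| ≤ c' * h^n * C := by
      calc |∫ t in (-1:ℝ)..1, kker n m t * R (h*t)|
          ≤ ∫ t in (-1:ℝ)..1, |kker n m t * R (h*t)| :=
            intervalIntegral.abs_integral_le_integral_abs (by norm_num)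
        _ ≤ ∫ t in (-1:ℝ)..1, |kker n m t| * (c' * h^n) := by
            apply intervalIntegral.integral_mono_on (by norm_num) ikR.abs
              (((kker_cont n m).abs.mul continuous_const).intervalIntegrable _ _)
            exact hpt
        _ = c' * h^n * C := by
            rw [intervalIntegral.integral_mul_const, hC]
            ring
    rw [Real.dist_eq, sub_zero]
    have habsE : |(-(1/h)) ^ n * ∫ t in (-1:ℝ)..1, kker n m t * R (h*t)|
        ≤ (1/h)^n * (c' * h^n * C) := by
      rw [abs_mul, abs_pow, abs_neg, abs_of_pos (by positivity : (0:ℝ) < 1/h)]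
      exact mul_le_mul_of_nonneg_left hint (by positivity)
    have heq : (1/h)^n * (c' * h^n * C) = c' * C := by
      rw [one_div, inv_pow]
      field_simp
    rw [heq] at habsE
    calc |(-(1/h)) ^ n * ∫ t in (-1:ℝ)..1, kker n m t * R (h*t)| ≤ c' * C := habsE
      _ < c' * (C+1) := by nlinarith
      _ = c := div_mul_cancel₀ c (by linarith)
  have hfinal := (tendsto_const_nhds.add hE :
    Filter.Tendsto (fun h : ℝ => iteratedDeriv n f x
        + (-(1/h)) ^ n * ∫ t in (-1:ℝ)..1, kker n m t * R (h*t))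
      (nhdsWithin (0:ℝ) (Set.Ioi 0)) (nhds (iteratedDeriv n f x + 0)))
  rw [add_zero] at hfinal
  have main' : (fun h : ℝ => (-(1/h)) ^ n * ∫ t in (-1:ℝ)..1, kker n m t * f (x + h*t))
      =ᶠ[nhdsWithin (0:ℝ) (Set.Ioi 0)]
        (fun h : ℝ => iteratedDeriv n f x
          + (-(1/h)) ^ n * ∫ t in (-1:ℝ)..1, kker n m t * R (h*t)) := main
  exact hfinal.congr' main'.symm
end

section
/- Let $m \geq 0$ be an integer. Then for all $t \in \mathbb{R}$, $$\frac{2}{\sqrt{\pi}}\sum_{j=0}^m (4j+5)\,\Gamma\!\left(j+\tfrac{5}{2}\right)\frac{(-1)^j}{j!}\,P_{2j+2}(t) = (-1)^m\,\frac{4\,\Gamma\!\left(m+\tfrac{7}{2}\right)}{\sqrt{\pi}\,\Gamma(m+1)\,(4m+7)}\,\Bigl[(2m+4)\,P_m^{(0,3/2)}(2t^2-1) + (2m+3)\,P_{m+1}^{(0,3/2)}(2t^2-1)\Bigr].$$ -/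
open Real Filter Finset

noncomputable def poch (a : ℝ) (k : ℕ) : ℝ := (ascPochhammer ℝ k).eval a

/-- Jacobi polynomial `P_k^{(α,β)}(x) = ((α+1)_k / k!) ₂F₁(-k, k+α+β+1; α+1; (1-x)/2)`. -/
noncomputable def jacobiP (k : ℕ) (α β : ℝ) (x : ℝ) : ℝ :=
  (poch (α + 1) k / (Nat.factorial k : ℝ)) *
    ∑ i ∈ Finset.range (k + 1),
      poch (-(k : ℝ)) i * poch ((k : ℝ) + α + β + 1) i /
        (poch (α + 1) i * (Nat.factorial i : ℝ)) * ((1 - x) / 2) ^ i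

lemma poch_zero (a : ℝ) : poch a 0 = 1 := by simp [poch]

lemma poch_succ (a : ℝ) (k : ℕ) : poch a (k+1) = poch a k * (a + k) := by
  simp [poch, ascPochhammer_succ_eval]

lemma poch_succ_left (a : ℝ) (k : ℕ) : poch a (k+1) = a * poch (a+1) k := by
  simp [poch, ascPochhammer_succ_left, Polynomial.eval_comp]

lemma poch_shift (a : ℝ) (k : ℕ) : poch a k * (a + k) = a * poch (a+1) k := by
  rw [← poch_succ, ← poch_succ_left]

lemma poch_add (a : ℝ) (r s : ℕ) : poch a (r + s) = poch a r * poch (a + r) s := by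
  induction s with
  | zero => simp [poch_zero]
  | succ s ih => rw [← Nat.add_assoc, poch_succ, ih, poch_succ]; push_cast; ring

lemma poch_one (k : ℕ) : poch 1 k = (Nat.factorial k : ℝ) := by
  induction k with
  | zero => simp [poch_zero]
  | succ k ih => rw [poch_succ, ih, Nat.factorial_succ]; push_cast; ring

lemma poch_nat_fact (n k : ℕ) : poch ((n:ℝ)+1) k * (Nat.factorial n : ℝ) = (Nat.factorial (n+k) : ℝ) := by
  induction k with
  | zero => simp [poch_zero]
  | succ k ih =>
    rw [poch_succ, ← Nat.add_assoc, Nat.factorial_succ]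
    push_cast
    nlinarith [ih]

lemma poch_pos {a : ℝ} (ha : 0 < a) (k : ℕ) : 0 < poch a k := by
  induction k with
  | zero => simp [poch_zero]
  | succ k ih => rw [poch_succ]; positivity

lemma poch_reflect (a : ℝ) (k : ℕ) : poch (-a) k = (-1)^k * poch (a - k + 1) k := by
  induction k with
  | zero => simp [poch_zero]
  | succ k ih =>
    rw [poch_succ, ih, poch_succ_left,
      show a - ((k+1:ℕ):ℝ) + 1 + 1 = a - k + 1 by push_cast; ring]
    push_cast
    ring

lemma poch_neg_nat_of_lt {k i : ℕ} (h : k < i) : poch (-(k:ℝ)) i = 0 := by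
  obtain ⟨d, rfl⟩ : ∃ d, i = k + 1 + d := ⟨i - (k+1), by omega⟩
  rw [poch_add, poch_succ]
  have : -(k:ℝ) + (k:ℕ) = 0 := by push_cast; ring
  rw [this]
  ring

lemma poch_half (k i : ℕ) :
    poch ((k:ℝ) + 1/2) i = (Nat.factorial (2*k+2*i) : ℝ) * (Nat.factorial k) /
      ((Nat.factorial (k+i)) * (Nat.factorial (2*k)) * 4^i) := by
  induction i with
  | zero =>
    simp only [poch_zero, Nat.mul_zero, Nat.add_zero, pow_zero, mul_one]
    have q1 : (0:ℝ) < (Nat.factorial (k) : ℝ) := by positivity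
    have q2 : (0:ℝ) < (Nat.factorial (2*k) : ℝ) := by positivity
    field_simp
  | succ i ih =>
    rw [poch_succ, ih]
    have h1 : (2*k+2*(i+1)) = (2*k+2*i) + 1 + 1 := by ring
    have h2 : (k + (i+1)) = (k+i) + 1 := by ring
    rw [h1, h2, Nat.factorial_succ, Nat.factorial_succ, Nat.factorial_succ]
    have q1 : (0:ℝ) < (Nat.factorial (k+i) : ℝ) := by positivity
    have q2 : (0:ℝ) < (Nat.factorial (2*k) : ℝ) := by positivity
    field_simp
    push_cast
    ring

lemma poch_sub_one (a : ℝ) (s : ℕ) :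
    poch (a-1) (s+1) = poch a (s+1) - (s+1) * poch a s := by
  rw [poch_succ_left, show a - 1 + 1 = a by ring, poch_succ]
  push_cast; ring

lemma poch_ne_zero {a : ℝ} (ha : 0 < a) (k : ℕ) : poch a k ≠ 0 := (poch_pos ha k).ne'

lemma CV : ∀ (n : ℕ) (b c : ℝ), 0 < c →
    (∑ s ∈ Finset.range (n+1),
      poch (-(n:ℝ)) s * poch b s / (poch c s * (Nat.factorial s : ℝ)))
      = poch (c-b) n / poch c n := by
  intro n
  induction n with
  | zero => intro b c hc; simp [poch_zero]
  | succ n ih =>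
    intro b c hc
    have hc' : (0:ℝ) < c + 1 := by linarith
    have hPn : poch c n ≠ 0 := poch_ne_zero hc n
    have hcn : c + (n:ℝ) ≠ 0 := by positivity
    have hQeq : poch (c+1) n = poch c n * (c+n) / c := by
      field_simp
      linarith [poch_shift c n]
    -- rewrite the sum
    have key : (∑ s ∈ Finset.range (n+2),
        poch (-((n+1:ℕ):ℝ)) s * poch b s / (poch c s * (Nat.factorial s : ℝ)))
        = (∑ s ∈ Finset.range (n+1),
            poch (-(n:ℝ)) s * poch b s / (poch c s * (Nat.factorial s : ℝ)))
          - (b/c) * ∑ u ∈ Finset.range (n+1),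
              poch (-(n:ℝ)) u * poch (b+1) u / (poch (c+1) u * (Nat.factorial u : ℝ)) := by
      rw [Finset.sum_range_succ' (fun s => poch (-((n+1:ℕ):ℝ)) s * poch b s / (poch c s * (Nat.factorial s : ℝ))) (n+1)]
      have step : ∀ u ∈ Finset.range (n+1),
          poch (-((n+1:ℕ):ℝ)) (u+1) * poch b (u+1) / (poch c (u+1) * (Nat.factorial (u+1) : ℝ))
          = poch (-(n:ℝ)) (u+1) * poch b (u+1) / (poch c (u+1) * (Nat.factorial (u+1) : ℝ))
            - (b/c) * (poch (-(n:ℝ)) u * poch (b+1) u / (poch (c+1) u * (Nat.factorial u : ℝ))) := by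
        intro u hu
        have hcast : -((n+1:ℕ):ℝ) = (-(n:ℝ)) - 1 := by push_cast; ring
        rw [hcast, poch_sub_one (-(n:ℝ)) u]
        rw [poch_succ_left b, poch_succ_left c, Nat.factorial_succ]
        have h1 : poch (c+1) u ≠ 0 := poch_ne_zero hc' u
        have h2 : (Nat.factorial u : ℝ) ≠ 0 := by positivity
        have h3 : ((u:ℝ)+1) ≠ 0 := by positivity
        field_simp
        push_cast
        ring
      rw [Finset.sum_congr rfl step, Finset.sum_sub_distrib, ← Finset.mul_sum]
      have last : poch (-(n:ℝ)) (n+1) * poch b (n+1) / (poch c (n+1) * (Nat.factorial (n+1) : ℝ)) = 0 := by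
        rw [poch_neg_nat_of_lt (Nat.lt_succ_self n)]
        simp
      have reassemble : (∑ u ∈ Finset.range (n+1),
          poch (-(n:ℝ)) (u+1) * poch b (u+1) / (poch c (u+1) * (Nat.factorial (u+1) : ℝ)))
          + poch (-(n:ℝ)) 0 * poch b 0 / (poch c 0 * (Nat.factorial 0 : ℝ))
          = ∑ s ∈ Finset.range (n+1),
            poch (-(n:ℝ)) s * poch b s / (poch c s * (Nat.factorial s : ℝ)) := by
        rw [← Finset.sum_range_succ' (fun s => poch (-(n:ℝ)) s * poch b s / (poch c s * (Nat.factorial s : ℝ))) (n+1),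
          Finset.sum_range_succ, last, add_zero]
      have h0 : poch (-((n+1:ℕ):ℝ)) 0 * poch b 0 / (poch c 0 * (Nat.factorial 0 : ℝ))
          = poch (-(n:ℝ)) 0 * poch b 0 / (poch c 0 * (Nat.factorial 0 : ℝ)) := by
        simp [poch_zero]
      rw [h0]
      linarith [reassemble]
    rw [key, ih b c hc, ih (b+1) (c+1) hc']
    rw [show c + 1 - (b+1) = c - b by ring]
    rw [poch_succ (c-b) n, poch_succ c n, hQeq]
    field_simp
    ring


lemma iteratedDeriv_polyEval (p : Polynomial ℝ) (n : ℕ) :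
    iteratedDeriv n (fun x => p.eval x) = fun x => (Polynomial.derivative^[n] p).eval x := by
  induction n with
  | zero => simp
  | succ n ih =>
    rw [iteratedDeriv_succ, ih, Function.iterate_succ_apply']
    funext x
    exact Polynomial.deriv _

lemma legendreP_eq_sum (k : ℕ) (t : ℝ) :
    legendreP (2*k) t = (1/((2:ℝ)^(2*k) * (Nat.factorial (2*k) : ℝ))) *
      ∑ r ∈ Finset.range (k+1), (-1:ℝ)^(k+r) * ((2*k).choose (k+r) : ℝ) *
        (((2*k+2*r).descFactorial (2*k) : ℕ) : ℝ) * t^(2*r) := by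
  have hfun : (fun y : ℝ => (y ^ 2 - 1) ^ (2*k))
      = fun y => Polynomial.eval y ((Polynomial.X^2 - 1 : Polynomial ℝ)^(2*k)) := by
    funext y; simp
  have hpoly : ((Polynomial.X^2 - 1 : Polynomial ℝ)^(2*k))
      = ∑ j ∈ Finset.range (2*k+1),
          Polynomial.C ((-1:ℝ)^(j+2*k) * ((2*k).choose j : ℝ)) * Polynomial.X^(2*j) := by
    rw [sub_pow]
    refine Finset.sum_congr rfl fun j hj => ?_
    rw [← pow_mul]
    simp only [map_mul, map_pow, map_natCast, map_neg, map_one, one_pow]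
    push_cast
    ring
  have hder : iteratedDeriv (2*k) (fun y : ℝ => (y ^ 2 - 1) ^ (2*k)) t
      = ∑ j ∈ Finset.range (2*k+1),
          ((-1:ℝ)^(j+2*k) * ((2*k).choose j : ℝ)) * (((2*j).descFactorial (2*k) : ℕ) : ℝ)
            * t^(2*j - 2*k) := by
    rw [hfun, iteratedDeriv_polyEval, hpoly, Polynomial.iterate_derivative_sum]
    simp only [Polynomial.eval_finset_sum]
    refine Finset.sum_congr rfl fun j hj => ?_
    rw [Polynomial.iterate_derivative_C_mul, Polynomial.iterate_derivative_X_pow_eq_natCast_mul]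
    simp [mul_assoc]
  have hsplit : ∑ j ∈ Finset.range (2*k+1),
          ((-1:ℝ)^(j+2*k) * ((2*k).choose j : ℝ)) * (((2*j).descFactorial (2*k) : ℕ) : ℝ)
            * t^(2*j - 2*k)
      = ∑ r ∈ Finset.range (k+1), (-1:ℝ)^(k+r) * ((2*k).choose (k+r) : ℝ) *
        (((2*k+2*r).descFactorial (2*k) : ℕ) : ℝ) * t^(2*r) := by
    conv_lhs => rw [Finset.range_eq_Ico]
    rw [← Finset.sum_Ico_consecutive _ (Nat.zero_le k) (by omega : k ≤ 2*k+1)]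
    have h1 : ∑ j ∈ Finset.Ico 0 k,
        ((-1:ℝ)^(j+2*k) * ((2*k).choose j : ℝ)) * (((2*j).descFactorial (2*k) : ℕ) : ℝ)
          * t^(2*j - 2*k) = 0 := by
      refine Finset.sum_eq_zero fun j hj => ?_
      rw [Finset.mem_Ico] at hj
      rw [Nat.descFactorial_eq_zero_iff_lt.mpr (by omega)]
      simp
    rw [h1, zero_add, Finset.sum_Ico_eq_sum_range]
    have h2 : 2*k+1-k = k+1 := by omega
    rw [h2]
    refine Finset.sum_congr rfl fun r hr => ?_
    rw [Finset.mem_range] at hr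
    have e1 : 2*(k+r) - 2*k = 2*r := by omega
    have e2 : 2*(k+r) = 2*k+2*r := by omega
    have e3 : (-1:ℝ)^(k+r+2*k) = (-1:ℝ)^(k+r) := by
      rw [pow_add]
      simp [pow_mul]
    rw [e1, e2, e3]
  rw [legendreP, hder, hsplit]

lemma inner_eval (r d : ℕ) :
    (∑ i ∈ Finset.range (r+d+1),
      poch (-((r+d:ℕ):ℝ)) i * poch (((r+d:ℕ):ℝ)+1/2) i /
        ((Nat.factorial i : ℝ) * (Nat.factorial i)) * ((i.choose r : ℕ):ℝ))
    = poch (-((r+d:ℕ):ℝ)) r * poch (((r+d:ℕ):ℝ)+1/2) r /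
        ((Nat.factorial r : ℝ) * (Nat.factorial r))
      * (poch (1/2 - ((r+d:ℕ):ℝ)) d / poch ((r:ℝ)+1) d) := by
  have hzero : ∀ i ∈ Finset.Ico 0 r,
      poch (-((r+d:ℕ):ℝ)) i * poch (((r+d:ℕ):ℝ)+1/2) i /
        ((Nat.factorial i : ℝ) * (Nat.factorial i)) * ((i.choose r : ℕ):ℝ) = 0 := by
    intro i hi
    rw [Finset.mem_Ico] at hi
    rw [Nat.choose_eq_zero_of_lt (by omega)]
    simp
  conv_lhs => rw [Finset.range_eq_Ico]
  rw [← Finset.sum_Ico_consecutive _ (Nat.zero_le r) (by omega : r ≤ r+d+1),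
    Finset.sum_eq_zero hzero, zero_add, Finset.sum_Ico_eq_sum_range,
    show r+d+1-r = d+1 by omega]
  have hterm : ∀ s ∈ Finset.range (d+1),
      poch (-((r+d:ℕ):ℝ)) (r+s) * poch (((r+d:ℕ):ℝ)+1/2) (r+s) /
        ((Nat.factorial (r+s) : ℝ) * (Nat.factorial (r+s))) * (((r+s).choose r : ℕ):ℝ)
      = (poch (-((r+d:ℕ):ℝ)) r * poch (((r+d:ℕ):ℝ)+1/2) r /
        ((Nat.factorial r : ℝ) * (Nat.factorial r))) *
        (poch (-((d:ℕ):ℝ)) s * poch ((((r+d:ℕ):ℝ)+1/2) + r) s /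
          (poch ((r:ℝ)+1) s * (Nat.factorial s : ℝ))) := by
    intro s hs
    rw [poch_add (-((r+d:ℕ):ℝ)) r s, poch_add (((r+d:ℕ):ℝ)+1/2) r s]
    have hc : (-((r+d:ℕ):ℝ) + r) = -((d:ℕ):ℝ) := by push_cast; ring
    rw [hc]
    have hfact : ((Nat.factorial (r+s) : ℝ)) = (Nat.factorial r : ℝ) * poch ((r:ℝ)+1) s := by
      rw [← poch_nat_fact r s]; ring
    have hchoose : (((r+s).choose r : ℕ):ℝ) * ((Nat.factorial r : ℝ) * (Nat.factorial s : ℝ))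
        = (Nat.factorial (r+s) : ℝ) := by
      have := Nat.choose_mul_factorial_mul_factorial (Nat.le_add_right r s)
      have h2 : r + s - r = s := by omega
      rw [h2] at this
      push_cast [← this]
      ring
    have hr0 : (Nat.factorial r : ℝ) ≠ 0 := by positivity
    have hs0 : (Nat.factorial s : ℝ) ≠ 0 := by positivity
    have hp0 : poch ((r:ℝ)+1) s ≠ 0 := poch_ne_zero (by positivity) s
    have hch2 : (((r+s).choose r : ℕ):ℝ) = poch ((r:ℝ)+1) s / (Nat.factorial s : ℝ) := by
      rw [hfact] at hchoose
      field_simp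
      exact mul_left_cancel₀ hr0 (by linarith [hchoose])
    rw [hfact, hch2]
    field_simp
  rw [Finset.sum_congr rfl hterm, ← Finset.mul_sum]
  rw [CV d (((r+d:ℕ):ℝ)+1/2 + r) ((r:ℝ)+1) (by positivity)]
  have : ((r:ℝ)+1) - ((((r+d:ℕ):ℝ)+1/2) + r) = 1/2 - ((r+d:ℕ):ℝ) := by push_cast; ring
  rw [this]

lemma coeff_eq (r d : ℕ) :
    (1/((2:ℝ)^(2*(r+d)) * (Nat.factorial (2*(r+d)) : ℝ))) *
      ((-1:ℝ)^((r+d)+r) * (((2*(r+d)).choose ((r+d)+r) : ℕ) : ℝ) *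
        (((2*(r+d)+2*r).descFactorial (2*(r+d)) : ℕ) : ℝ))
    = (poch (-((r+d:ℕ):ℝ)) r * poch (((r+d:ℕ):ℝ)+1/2) r /
        ((Nat.factorial r : ℝ) * (Nat.factorial r))
      * (poch (1/2 - ((r+d:ℕ):ℝ)) d / poch ((r:ℝ)+1) d)) * (-1:ℝ)^r := by
  have hd0 : (Nat.factorial d : ℝ) ≠ 0 := by positivity
  have hr0 : (Nat.factorial r : ℝ) ≠ 0 := by positivity
  have h1 : poch (-((r+d:ℕ):ℝ)) r = (-1:ℝ)^r * poch ((d:ℝ)+1) r := by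
    rw [poch_reflect, show ((r+d:ℕ):ℝ) - (r:ℕ) + 1 = (d:ℝ)+1 by push_cast; ring]
  have h2 : poch ((d:ℝ)+1) r = (Nat.factorial (d+r) : ℝ) / (Nat.factorial d : ℝ) := by
    rw [← poch_nat_fact d r]; field_simp
  have h3 : poch (((r+d:ℕ):ℝ)+1/2) r
      = (Nat.factorial (2*(r+d)+2*r) : ℝ) * (Nat.factorial (r+d) : ℝ) /
        ((Nat.factorial ((r+d)+r) : ℝ) * (Nat.factorial (2*(r+d)) : ℝ) * 4^r) := by
    have := poch_half (r+d) r
    push_cast at this ⊢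
    rw [this]
  have h4 : poch (1/2 - ((r+d:ℕ):ℝ)) d = (-1:ℝ)^d * poch ((r:ℝ)+1/2) d := by
    rw [show (1/2 - ((r+d:ℕ):ℝ)) = -(((r+d:ℕ):ℝ) - 1/2) by ring, poch_reflect,
      show ((r+d:ℕ):ℝ) - 1/2 - (d:ℕ) + 1 = (r:ℝ)+1/2 by push_cast; ring]
  have h5 : poch ((r:ℝ)+1/2) d
      = (Nat.factorial (2*r+2*d) : ℝ) * (Nat.factorial r : ℝ) /
        ((Nat.factorial (r+d) : ℝ) * (Nat.factorial (2*r) : ℝ) * 4^d) := by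
    have := poch_half r d
    push_cast at this ⊢
    rw [this]
  have h6 : poch ((r:ℝ)+1) d = (Nat.factorial (r+d) : ℝ) / (Nat.factorial r : ℝ) := by
    rw [← poch_nat_fact r d]; field_simp
  have h7 : (((2*(r+d)+2*r).descFactorial (2*(r+d)) : ℕ) : ℝ)
      = (Nat.factorial (2*(r+d)+2*r) : ℝ) / (Nat.factorial (2*r) : ℝ) := by
    have := Nat.factorial_mul_descFactorial (show 2*(r+d) ≤ 2*(r+d)+2*r by omega)
    rw [show 2*(r+d)+2*r - 2*(r+d) = 2*r by omega] at this
    have h2r0 : (Nat.factorial (2*r) : ℝ) ≠ 0 := by positivity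
    field_simp
    push_cast [← this]
    ring
  have h8 : (((2*(r+d)).choose ((r+d)+r) : ℕ) : ℝ)
      = (Nat.factorial (2*(r+d)) : ℝ) / ((Nat.factorial ((r+d)+r) : ℝ) * (Nat.factorial d : ℝ)) := by
    have := Nat.choose_mul_factorial_mul_factorial (show (r+d)+r ≤ 2*(r+d) by omega)
    rw [show 2*(r+d) - ((r+d)+r) = d by omega] at this
    have ha : (Nat.factorial ((r+d)+r) : ℝ) ≠ 0 := by positivity
    field_simp
    push_cast [← this]
    ring
  have h9 : (-1:ℝ)^((r+d)+r) = (-1:ℝ)^d := by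
    rw [show (r+d)+r = d + 2*r by ring, pow_add, pow_mul]
    norm_num
  have h10 : (2:ℝ)^(2*(r+d)) = 4^(r+d) := by
    rw [pow_mul]; norm_num
  have h11 : (Nat.factorial (2*r+2*d) : ℝ) = (Nat.factorial (2*(r+d)+2*r) : ℝ) * (Nat.factorial (2*r) : ℝ) / (Nat.factorial (2*(r+d)+2*r) : ℝ) * ((Nat.factorial (2*r+2*d) : ℝ) / (Nat.factorial (2*r) : ℝ)) := by
    have hx : (Nat.factorial (2*(r+d)+2*r) : ℝ) ≠ 0 := by positivity
    have hy : (Nat.factorial (2*r) : ℝ) ≠ 0 := by positivity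
    field_simp
  rw [h1, h2, h3, h4, h5, h6, h7, h8, h9, h10]
  rw [show (Nat.factorial (d+r) : ℝ) = (Nat.factorial (r+d) : ℝ) by rw [Nat.add_comm],
    show (Nat.factorial (2*r+2*d) : ℝ) = (Nat.factorial (2*(r+d)) : ℝ) by rw [show 2*r+2*d = 2*(r+d) by ring]]
  have hk0 : (Nat.factorial (2*(r+d)) : ℝ) ≠ 0 := by positivity
  have hkk : (Nat.factorial ((r+d)+r) : ℝ) ≠ 0 := by positivity
  have hrd : (Nat.factorial (r+d) : ℝ) ≠ 0 := by positivity
  have h2r : (Nat.factorial (2*r) : ℝ) ≠ 0 := by positivity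
  field_simp
  ring_nf
  rw [show ((-1:ℝ))^(r*2) = 1 by rw [show r*2 = 2*r by ring, pow_mul]; norm_num]
  ring

lemma legendre_quad (k : ℕ) (t : ℝ) :
    legendreP (2*k) t = ∑ i ∈ Finset.range (k+1),
      poch (-(k:ℝ)) i * poch ((k:ℝ)+1/2) i /
        ((Nat.factorial i : ℝ) * (Nat.factorial i)) * (1-t^2)^i := by
  have hbin : ∀ i : ℕ, (1-t^2)^i = ∑ r ∈ Finset.range (i+1), (-1:ℝ)^r * (i.choose r : ℝ) * t^(2*r) := by
    intro i
    rw [show (1-t^2) = (-t^2) + 1 by ring, add_pow]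
    refine Finset.sum_congr rfl fun r hr => ?_
    have : (-t^2)^r = (-1:ℝ)^r * t^(2*r) := by rw [neg_pow, pow_mul]
    rw [this, one_pow]
    ring
  have hpad : ∀ i ∈ Finset.range (k+1),
      (1-t^2)^i = ∑ r ∈ Finset.range (k+1), (-1:ℝ)^r * (i.choose r : ℝ) * t^(2*r) := by
    intro i hi
    rw [Finset.mem_range] at hi
    rw [hbin i]
    apply Finset.sum_subset (Finset.range_subset_range.mpr (by omega))
    intro r hr hnr
    rw [Finset.mem_range, not_lt] at hnr
    rw [Nat.choose_eq_zero_of_lt (by omega)]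
    simp
  have RHSeq : (∑ i ∈ Finset.range (k+1),
      poch (-(k:ℝ)) i * poch ((k:ℝ)+1/2) i /
        ((Nat.factorial i : ℝ) * (Nat.factorial i)) * (1-t^2)^i)
      = ∑ r ∈ Finset.range (k+1),
          (∑ i ∈ Finset.range (k+1),
            poch (-(k:ℝ)) i * poch ((k:ℝ)+1/2) i /
              ((Nat.factorial i : ℝ) * (Nat.factorial i)) * (i.choose r : ℝ))
          * ((-1:ℝ)^r * t^(2*r)) := by
    rw [Finset.sum_congr rfl (fun i hi => by rw [hpad i hi, Finset.mul_sum])]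
    rw [Finset.sum_comm]
    refine Finset.sum_congr rfl fun r hr => ?_
    rw [Finset.sum_mul]
    refine Finset.sum_congr rfl fun i hi => ?_
    ring
  rw [RHSeq, legendreP_eq_sum, Finset.mul_sum]
  refine Finset.sum_congr rfl fun r hr => ?_
  rw [Finset.mem_range] at hr
  obtain ⟨d, rfl⟩ := Nat.exists_eq_add_of_le (Nat.lt_succ_iff.mp hr)
  rw [inner_eval r d]
  linear_combination (t^(2*r)) * coeff_eq r d


lemma jacobi_expand (k : ℕ) (β : ℝ) (t : ℝ) :
    jacobiP k 0 β (2*t^2-1) = ∑ i ∈ Finset.range (k+1),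
      poch (-(k:ℝ)) i * poch ((k:ℝ)+β+1) i /
        ((Nat.factorial i : ℝ) * (Nat.factorial i)) * (1-t^2)^i := by
  unfold jacobiP
  rw [show (0:ℝ)+1 = 1 by ring, poch_one k,
    div_self (by positivity : ((Nat.factorial k : ℕ):ℝ) ≠ 0), one_mul]
  refine Finset.sum_congr rfl fun i hi => ?_
  rw [poch_one i, show ((k:ℝ) + 0 + β + 1) = (k:ℝ)+β+1 by ring,
    show (1 - (2*t^2-1))/2 = 1-t^2 by ring]

lemma sqrtpi_ne : Real.sqrt Real.pi ≠ 0 := (Real.sqrt_pos.mpr Real.pi_pos).ne'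

lemma Gamma52 : Real.Gamma (5/2) = 3/4 * Real.sqrt Real.pi := by
  rw [show (5/2:ℝ) = (3/2) + 1 by norm_num, Real.Gamma_add_one (by norm_num),
    show (3/2:ℝ) = (1/2) + 1 by norm_num, Real.Gamma_add_one (by norm_num),
    Real.Gamma_one_half_eq]
  ring

lemma Gamma72 : Real.Gamma (7/2) = 15/8 * Real.sqrt Real.pi := by
  rw [show (7/2:ℝ) = (5/2) + 1 by norm_num, Real.Gamma_add_one (by norm_num), Gamma52]
  ring

set_option maxHeartbeats 1000000 in
theorem stmt14 (m : ℕ) (t : ℝ) :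
    (2 / Real.sqrt Real.pi) *
        ∑ j ∈ Finset.range (m+1),
          (4*(j:ℝ) + 5) * Real.Gamma ((j:ℝ) + 5/2) * ((-1:ℝ)^j / (Nat.factorial j : ℝ)) *
            legendreP (2*j + 2) t =
      (-1:ℝ)^m * (4 * Real.Gamma ((m:ℝ) + 7/2) /
          (Real.sqrt Real.pi * Real.Gamma ((m:ℝ) + 1) * (4*(m:ℝ) + 7))) *
        ((2*(m:ℝ) + 4) * jacobiP m 0 (3/2) (2*t^2 - 1)
          + (2*(m:ℝ) + 3) * jacobiP (m+1) 0 (3/2) (2*t^2 - 1)) := by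
  induction m with
  | zero =>
    rw [Finset.sum_range_one]
    rw [show 2*0+2 = 2*1 from rfl, legendre_quad 1 t,
      jacobi_expand 0 (3/2) t, jacobi_expand 1 (3/2) t]
    simp only [Nat.cast_zero, Nat.cast_one, pow_zero, Finset.sum_range_succ,
      Finset.sum_range_zero, Nat.factorial_zero, Nat.factorial_one]
    rw [show (0:ℝ) + 5/2 = 5/2 by ring, show (0:ℝ) + 7/2 = 7/2 by ring, Gamma52, Gamma72,
      show (0:ℝ) + 1 = 1 by ring, Real.Gamma_one]
    simp only [poch_zero, poch_succ, zero_add, Nat.cast_one, Nat.cast_zero]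
    have h := sqrtpi_ne
    field_simp
    ring
  | succ n ih =>
    rw [Finset.sum_range_succ, mul_add, ih]
    rw [show 2*(n+1)+2 = 2*(n+2) by ring, legendre_quad (n+2) t]
    rw [show n+1+1 = n+2 by omega]
    rw [jacobi_expand n (3/2) t, jacobi_expand (n+1) (3/2) t, jacobi_expand (n+2) (3/2) t]
    have hG7 : (0:ℝ) < (n:ℝ)+7/2 := by positivity
    rw [show ((n+1:ℕ):ℝ) + 5/2 = (n:ℝ)+7/2 by push_cast; ring]
    rw [show ((n+1:ℕ):ℝ) + 7/2 = ((n:ℝ)+7/2)+1 by push_cast; ring,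
      Real.Gamma_add_one hG7.ne']
    rw [show ((n+1:ℕ):ℝ) + 1 = ((n:ℝ)+1)+1 by push_cast; ring,
      Real.Gamma_add_one (by positivity : ((n:ℝ)+1) ≠ 0)]
    rw [Real.Gamma_nat_eq_factorial]
    have padn : (∑ i ∈ Finset.range (n+1),
        poch (-(n:ℝ)) i * poch ((n:ℝ)+3/2+1) i /
          ((Nat.factorial i : ℝ) * (Nat.factorial i)) * (1-t^2)^i)
        = ∑ i ∈ Finset.range (n+3),
        poch (-(n:ℝ)) i * poch ((n:ℝ)+3/2+1) i /
          ((Nat.factorial i : ℝ) * (Nat.factorial i)) * (1-t^2)^i := by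
      apply Finset.sum_subset (Finset.range_subset_range.mpr (by omega))
      intro i hi hni
      rw [Finset.mem_range, not_lt] at hni
      rw [poch_neg_nat_of_lt (by omega)]
      simp
    have padn1 : (∑ i ∈ Finset.range (n+2),
        poch (-((n+1:ℕ):ℝ)) i * poch (((n+1:ℕ):ℝ)+3/2+1) i /
          ((Nat.factorial i : ℝ) * (Nat.factorial i)) * (1-t^2)^i)
        = ∑ i ∈ Finset.range (n+3),
        poch (-((n+1:ℕ):ℝ)) i * poch (((n+1:ℕ):ℝ)+3/2+1) i /
          ((Nat.factorial i : ℝ) * (Nat.factorial i)) * (1-t^2)^i := by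
      apply Finset.sum_subset (Finset.range_subset_range.mpr (by omega))
      intro i hi hni
      rw [Finset.mem_range, not_lt] at hni
      rw [poch_neg_nat_of_lt (by omega)]
      simp
    rw [padn, padn1]
    simp only [mul_add, Finset.mul_sum, ← Finset.sum_add_distrib]
    refine Finset.sum_congr rfl fun i hi => ?_
    have hfs : (Nat.factorial (n+1) : ℝ) = ((n:ℝ)+1) * (Nat.factorial n : ℝ) := by
      rw [Nat.factorial_succ]; push_cast; ring
    rw [hfs]
    push_cast
    rw [show ((n:ℝ)+3/2+1) = (n:ℝ)+5/2 by ring,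
      show ((n:ℝ)+1+3/2+1) = (n:ℝ)+7/2 by ring,
      show ((n:ℝ)+2+3/2+1) = (n:ℝ)+9/2 by ring,
      show ((n:ℝ)+2+1/2) = (n:ℝ)+5/2 by ring]
    have e1 := poch_shift (-((n:ℝ)+2)) i
    rw [show (-((n:ℝ)+2)+1) = -((n:ℝ)+1) by ring] at e1
    have e2 := poch_shift (-((n:ℝ)+1)) i
    rw [show (-((n:ℝ)+1)+1) = -(n:ℝ) by ring] at e2
    have e3 := poch_shift ((n:ℝ)+5/2) i
    rw [show ((n:ℝ)+5/2+1) = (n:ℝ)+7/2 by ring] at e3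
    have e4 := poch_shift ((n:ℝ)+7/2) i
    rw [show ((n:ℝ)+7/2+1) = (n:ℝ)+9/2 by ring] at e4
    set X := poch (-((n:ℝ)+2)) i with hXdef
    set P1v := poch (-((n:ℝ)+1)) i with hP1def
    set P0v := poch (-(n:ℝ)) i with hP0def
    set Yv := poch ((n:ℝ)+5/2) i with hYdef
    set Y1v := poch ((n:ℝ)+7/2) i with hY1def
    set Y2v := poch ((n:ℝ)+9/2) i with hY2def
    set G := Real.Gamma ((n:ℝ)+7/2) with hGdef
    have hP1 : P1v = X * ((n:ℝ)+2-(i:ℝ)) / ((n:ℝ)+2) := by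
      have hden : (((n:ℝ)+2)) ≠ 0 := by positivity
      rw [eq_div_iff hden]
      first
      | linear_combination e1
      | linear_combination -e1
    have hP0 : P0v = P1v * ((n:ℝ)+1-(i:ℝ)) / ((n:ℝ)+1) := by
      have hden : (((n:ℝ)+1)) ≠ 0 := by positivity
      rw [eq_div_iff hden]
      first
      | linear_combination e2
      | linear_combination -e2
    have hY2 : Y2v = Y1v * ((n:ℝ)+7/2+(i:ℝ)) / ((n:ℝ)+7/2) := by
      have hden : (((n:ℝ)+7/2)) ≠ 0 := by positivity
      rw [eq_div_iff hden]
      first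
      | linear_combination e4
      | linear_combination -e4
    have hY1 : Y1v = Yv * ((n:ℝ)+5/2+(i:ℝ)) / ((n:ℝ)+5/2) := by
      have hden : (((n:ℝ)+5/2)) ≠ 0 := by positivity
      rw [eq_div_iff hden]
      first
      | linear_combination e3
      | linear_combination -e3
    rw [hP0, hP1, hY2, hY1, pow_succ]
    set S := Real.sqrt Real.pi with hSdef
    set K := ((-1:ℝ))^n with hKdef
    set T := (1-t^2)^i with hTdef
    set F := (Nat.factorial n : ℝ) with hFdef
    set Fi := (Nat.factorial i : ℝ) with hFidef
    have hS : S ≠ 0 := by rw [hSdef]; exact sqrtpi_ne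
    have hGn : G ≠ 0 := by rw [hGdef]; exact (Real.Gamma_pos_of_pos hG7).ne'
    have hnf : F ≠ 0 := by rw [hFdef]; positivity
    have hif : Fi ≠ 0 := by rw [hFidef]; positivity
    have h1 : ((n:ℝ)+1) ≠ 0 := by positivity
    have h2 : ((n:ℝ)+2) ≠ 0 := by positivity
    have h3 : ((n:ℝ)+5/2) ≠ 0 := by positivity
    have h4 : ((n:ℝ)+7/2) ≠ 0 := by positivity
    have h5 : (4*(n:ℝ)+7) ≠ 0 := by positivity
    have h6 : (4*(n:ℝ)+11) ≠ 0 := by positivity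
    field_simp
    ring
end
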